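/- If F(t) = G(Φ(t − δ(x))) where δ(x) ∈ ℝ, Φ is a CDF with mean m, and G∘Φ corresponds to an integrable distribution, then the mean of F equals m + δ(x) + ∫_{-∞}^{∞} ( Φ(t) − G(Φ(t)) ) dt, decomposing the predictive mean into the original ensemble mean, a direct correction δ, and an indirect correction from G. -/
import Mathlib


open MeasureTheory Set

/-- The mean of a distribution with CDF `H`, via `∫_0^∞ (1 - H) - ∫_{-∞}^0 H`. -/
noncomputable def cdfMean (H : ℝ → ℝ) : ℝ :=
  (∫ t in Ioi (0 : ℝ), (1 - H t)) - ∫ t in Iio (0 : ℝ), H t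

section aux

private lemma mp_sub (c : ℝ) : MeasurePreserving (fun t : ℝ => t - c) volume volume :=
  measurePreserving_sub_right volume c

private lemma emb_sub (c : ℝ) : MeasurableEmbedding (fun t : ℝ => t - c) :=
  (MeasurableEquiv.subRight c).measurableEmbedding

private lemma preimage_Ioi (c a : ℝ) : (fun t : ℝ => t - c) ⁻¹' (Ioi (a - c)) = Ioi a := by
  ext t; simp [sub_lt_sub_iff_right]

private lemma preimage_Iio (c a : ℝ) : (fun t : ℝ => t - c) ⁻¹' (Iio (a - c)) = Iio a := by
  ext t; simp [sub_lt_sub_iff_right]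

private lemma shift_int {f : ℝ → ℝ} {c : ℝ} {s : Set ℝ}
    (h : IntegrableOn (fun t => f (t - c)) ((fun t : ℝ => t - c) ⁻¹' s)) :
    IntegrableOn f s := by
  have := ((mp_sub c).restrict_preimage_emb (emb_sub c) s).integrable_comp_emb (emb_sub c)
    (g := f)
  exact this.mp h

private lemma shift_eq (f : ℝ → ℝ) (c : ℝ) (s : Set ℝ) :
    ∫ t in (fun t : ℝ => t - c) ⁻¹' s, f (t - c) = ∫ t in s, f t :=
  (mp_sub c).setIntegral_preimage_emb (emb_sub c) f s

/-- `∫_{Ioi a} f - ∫_{Ioi b} f = ∫_a^b f`. -/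
private lemma integral_Ioi_sub_Ioi {f : ℝ → ℝ} {a b : ℝ}
    (ha : IntegrableOn f (Ioi a)) (hb : IntegrableOn f (Ioi b)) :
    (∫ x in Ioi a, f x) - ∫ x in Ioi b, f x = ∫ x in a..b, f x := by
  wlog hab : a ≤ b generalizing a b
  · rw [intervalIntegral.integral_symm, ← this hb ha (le_of_not_ge hab), neg_sub]
  rw [intervalIntegral.integral_of_le hab, sub_eq_iff_eq_add, ← setIntegral_union
    (Ioc_disjoint_Ioi le_rfl) measurableSet_Ioi
    (ha.mono_set Ioc_subset_Ioi_self) (ha.mono_set (Ioi_subset_Ioi hab)),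
    Ioc_union_Ioi_eq_Ioi hab]

private lemma integral_Iio_sub_Iio {f : ℝ → ℝ} {a b : ℝ}
    (ha : IntegrableOn f (Iio a)) (hb : IntegrableOn f (Iio b)) :
    (∫ x in Iio b, f x) - ∫ x in Iio a, f x = ∫ x in a..b, f x := by
  rw [setIntegral_congr_set Iio_ae_eq_Iic, setIntegral_congr_set Iio_ae_eq_Iic]
  exact intervalIntegral.integral_Iic_sub_Iic
    (ha.congr_set_ae Iio_ae_eq_Iic.symm) (hb.congr_set_ae Iio_ae_eq_Iic.symm)

/-- Translation of the CDF shifts the mean. -/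
private lemma cdfMean_shift (K : ℝ → ℝ) (c : ℝ)
    (h1 : IntegrableOn (fun t => 1 - K t) (Ioi 0))
    (h2 : IntegrableOn K (Iio 0))
    (h1' : IntegrableOn (fun t => 1 - K (t - c)) (Ioi 0))
    (h2' : IntegrableOn (fun t => K (t - c)) (Iio 0)) :
    cdfMean (fun t => K (t - c)) = cdfMean K + c := by
  have e1 : (Ioi (0 : ℝ)) = (fun t : ℝ => t - c) ⁻¹' (Ioi (0 - c)) := (preimage_Ioi c 0).symm
  have e2 : (Iio (0 : ℝ)) = (fun t : ℝ => t - c) ⁻¹' (Iio (0 - c)) := (preimage_Iio c 0).symm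
  have h1'' : IntegrableOn (fun t => 1 - K t) (Ioi (0 - c)) :=
    shift_int (by rw [← e1]; exact h1')
  have h2'' : IntegrableOn K (Iio (0 - c)) := shift_int (by rw [← e2]; exact h2')
  have key1 : ∫ t in Ioi (0:ℝ), (1 - K (t - c)) = ∫ t in Ioi (0 - c), (1 - K t) := by
    rw [e1]; exact shift_eq (fun t => 1 - K t) c (Ioi (0 - c))
  have key2 : ∫ t in Iio (0:ℝ), K (t - c) = ∫ t in Iio (0 - c), K t := by
    rw [e2]; exact shift_eq K c (Iio (0 - c))
  have hI1 : IntervalIntegrable (fun t => 1 - K t) volume (0 - c) 0 := by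
    rw [intervalIntegrable_iff]
    rcases le_total (0 - c) 0 with h | h
    · exact (h1''.mono_set (by rw [uIoc_of_le h]; exact Ioc_subset_Ioi_self))
    · exact (h1.mono_set (by rw [uIoc_of_ge h]; exact Ioc_subset_Ioi_self))
  have hIK : IntervalIntegrable K volume (0 - c) 0 := by
    have := (intervalIntegrable_const (c := (1:ℝ)) (a := 0 - c) (b := 0)).sub hI1
    simpa using this
  have d1 : (∫ t in Ioi (0 - c), (1 - K t)) - ∫ t in Ioi (0:ℝ), (1 - K t)
      = ∫ t in (0 - c)..0, (1 - K t) := integral_Ioi_sub_Ioi h1'' h1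
  have d2 : (∫ t in Iio (0:ℝ), K t) - ∫ t in Iio (0 - c), K t
      = ∫ t in (0 - c)..0, K t := integral_Iio_sub_Iio h2'' h2
  have sum1 : (∫ t in (0 - c)..0, (1 - K t)) + ∫ t in (0 - c)..0, K t = c := by
    rw [← intervalIntegral.integral_add hI1 hIK]
    simp
  unfold cdfMean
  rw [key1, key2]
  linarith [d1, d2, sum1]

end aux

/-- BNE predictive mean decomposition.  If `F t = G (Φ (t - δx))` where
`Φ` is a CDF with mean `m` and `G ∘ Φ` corresponds to an integrable distribution, then
`mean F = m + δx + ∫ (Φ t - G (Φ t)) dt`: the original ensemble mean, the direct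
correction `δ`, and the indirect correction from `G`. -/
theorem bne_predictive_mean_decomposition
    (Φ : ℝ → ℝ) (hΦmono : Monotone Φ) (hΦrange : ∀ t, Φ t ∈ Icc (0 : ℝ) 1)
    (G : ℝ → ℝ) (hGcont : ContinuousOn G (Icc 0 1))
    (hGmono : StrictMonoOn G (Icc 0 1)) (hGbij : BijOn G (Icc 0 1) (Icc 0 1))
    (δx m : ℝ) (hm : cdfMean Φ = m)
    (F : ℝ → ℝ) (hF : ∀ t, F t = G (Φ (t - δx)))
    (hΦint₁ : IntegrableOn (fun t => 1 - Φ t) (Ioi 0))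
    (hΦint₂ : IntegrableOn Φ (Iio 0))
    (hGΦint₁ : IntegrableOn (fun t => 1 - G (Φ t)) (Ioi 0))
    (hGΦint₂ : IntegrableOn (fun t => G (Φ t)) (Iio 0))
    (hFint₁ : IntegrableOn (fun t => 1 - F t) (Ioi 0))
    (hFint₂ : IntegrableOn F (Iio 0)) :
    cdfMean F = m + δx + ∫ t : ℝ, (Φ t - G (Φ t)) := by
  have hFeq : F = fun t => G (Φ (t - δx)) := funext hF
  -- difference of Φ and G∘Φ on the two half-lines
  have hdiff₁ : IntegrableOn (fun t => Φ t - G (Φ t)) (Ioi 0) := by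
    have h := hGΦint₁.sub hΦint₁
    exact h.congr (Filter.Eventually.of_forall fun t => by simp [Pi.sub_apply])
  have hdiff₂ : IntegrableOn (fun t => Φ t - G (Φ t)) (Iio 0) := by
    exact hΦint₂.sub hGΦint₂
  have hdiff₂' : IntegrableOn (fun t => Φ t - G (Φ t)) (Iic 0) :=
    hdiff₂.congr_set_ae Iio_ae_eq_Iic.symm
  have hsplit : (∫ t in Iic (0:ℝ), (Φ t - G (Φ t))) + (∫ t in Ioi (0:ℝ), (Φ t - G (Φ t)))
      = ∫ t : ℝ, (Φ t - G (Φ t)) :=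
    intervalIntegral.integral_Iic_add_Ioi hdiff₂' hdiff₁
  have hIicIio : (∫ t in Iic (0:ℝ), (Φ t - G (Φ t))) = ∫ t in Iio (0:ℝ), (Φ t - G (Φ t)) :=
    setIntegral_congr_set Iio_ae_eq_Iic.symm
  -- cdfMean of G∘Φ
  have hGΦmean : cdfMean (fun t => G (Φ t)) = cdfMean Φ + ∫ t : ℝ, (Φ t - G (Φ t)) := by
    unfold cdfMean
    have e1 : ∫ t in Ioi (0:ℝ), (1 - G (Φ t)) =
        (∫ t in Ioi (0:ℝ), (1 - Φ t)) + ∫ t in Ioi (0:ℝ), (Φ t - G (Φ t)) := by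
      rw [← integral_add hΦint₁ hdiff₁]
      congr 1; funext t; ring
    have e2 : ∫ t in Iio (0:ℝ), G (Φ t) =
        (∫ t in Iio (0:ℝ), Φ t) - ∫ t in Iio (0:ℝ), (Φ t - G (Φ t)) := by
      rw [← integral_sub hΦint₂ hdiff₂]
      congr 1; funext t; ring
    rw [e1, e2]
    linarith [hsplit, hIicIio]
  -- shift
  have hshift : cdfMean F = cdfMean (fun t => G (Φ t)) + δx := by
    rw [hFeq]
    exact cdfMean_shift (fun t => G (Φ t)) δx hGΦint₁ hGΦint₂
      (by simpa [hFeq] using hFint₁) (by simpa [hFeq] using hFint₂)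
  rw [hshift, hGΦmean, hm]; ring
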